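/- arXiv:1507.03913 — 2 statements merged into one kernel-verified Lean document; each statement's English description precedes it below -/
import Mathlib

section
/- Orthogonality of the glued classes: with the notation of the gluing theorem, if X ∈ D satisfies qX ∈ D¹_{≥0} and i_L X ∈ D⁰_{≥0}, and Y ∈ D satisfies qY ∈ D¹_{<0} and i_R Y ∈ D⁰_{<0}, then Hom_D(X, Y) = 0. -/
open CategoryTheory Limits ZeroObject

/-- A recollement of categories with zero objects (e.g. stable ∞-categories or
triangulated categories), in the sense of Beilinson–Bernstein–Deligne. -/
structure Recollement (D₀ : Type*) (D : Type*) (D₁ : Type*)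
    [Category D₀] [Category D] [Category D₁]
    [HasZeroMorphisms D₀] [HasZeroMorphisms D] [HasZeroMorphisms D₁]
    [HasZeroObject D₀] [HasZeroObject D] [HasZeroObject D₁] where
  i : D₀ ⥤ D
  iL : D ⥤ D₀
  iR : D ⥤ D₀
  q : D ⥤ D₁
  qL : D₁ ⥤ D
  qR : D₁ ⥤ D
  adj_iL : iL ⊣ i
  adj_iR : i ⊣ iR
  adj_qL : qL ⊣ q
  adj_qR : q ⊣ qR
  counit_iL_iso : IsIso adj_iL.counit
  unit_iR_iso : IsIso adj_iR.unit
  unit_qL_iso : IsIso adj_qL.unit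
  counit_qR_iso : IsIso adj_qR.counit
  im_i_eq_ker_q : ∀ X : D, (∃ Y : D₀, Nonempty (i.obj Y ≅ X)) ↔ IsZero (q.obj X)
  fib_cofib_q_i : ∀ X : D,
    IsPullback (adj_qL.counit.app X) (0 : (q ⋙ qL).obj X ⟶ 0)
      (adj_iL.unit.app X) (0 : (0 : D) ⟶ (iL ⋙ i).obj X) ∧
    IsPushout (adj_qL.counit.app X) (0 : (q ⋙ qL).obj X ⟶ 0)
      (adj_iL.unit.app X) (0 : (0 : D) ⟶ (iL ⋙ i).obj X)
  fib_cofib_i_q : ∀ X : D,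
    IsPullback (adj_iR.counit.app X) (0 : (iR ⋙ i).obj X ⟶ 0)
      (adj_qR.unit.app X) (0 : (0 : D) ⟶ (q ⋙ qR).obj X) ∧
    IsPushout (adj_iR.counit.app X) (0 : (iR ⋙ i).obj X ⟶ 0)
      (adj_qR.unit.app X) (0 : (0 : D) ⟶ (q ⋙ qR).obj X)

/-- A `t`-structure on a category with zero object and shift, given by an aisle and a
coaisle: both classes are closed under isomorphism and the appropriate shift, morphisms
from the aisle to the coaisle vanish, and every object sits in a (co)fiber sequence
`S X ⟶ X ⟶ R X` with `S X` in the aisle and `R X` in the coaisle. -/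
structure TStructure (C : Type*) [Category C] [HasZeroMorphisms C] [HasZeroObject C]
    [HasShift C ℤ] where
  aisle : Set C
  coaisle : Set C
  aisle_iso : ∀ ⦃X Y : C⦄, (X ≅ Y) → X ∈ aisle → Y ∈ aisle
  coaisle_iso : ∀ ⦃X Y : C⦄, (X ≅ Y) → X ∈ coaisle → Y ∈ coaisle
  aisle_shift : ∀ X ∈ aisle, X⟦(1 : ℤ)⟧ ∈ aisle
  coaisle_shift : ∀ X ∈ coaisle, X⟦(-1 : ℤ)⟧ ∈ coaisle
  hom_zero : ∀ ⦃X Y : C⦄, X ∈ aisle → Y ∈ coaisle → ∀ f : X ⟶ Y, f = 0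
  trunc : ∀ X : C, ∃ (S R : C) (s : S ⟶ X) (r : X ⟶ R),
    S ∈ aisle ∧ R ∈ coaisle ∧
    IsPullback s (0 : S ⟶ 0) r (0 : (0 : C) ⟶ R) ∧
    IsPushout s (0 : S ⟶ 0) r (0 : (0 : C) ⟶ R)

/-- A left adjoint out of a category with a zero object sends the zero object to a
zero object. -/
lemma leftAdjoint_isZero_obj_zero {C E : Type*} [Category C] [Category E]
    [HasZeroMorphisms C] [HasZeroMorphisms E] [HasZeroObject C]
    {F : C ⥤ E} {G : E ⥤ C} (adj : F ⊣ G) : IsZero (F.obj (0 : C)) := by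
  rw [IsZero.iff_id_eq_zero]
  apply (adj.homEquiv (0 : C) (F.obj 0)).injective
  exact (isZero_zero C).eq_of_src _ _

/-- A left adjoint between categories with zero morphisms (with a zero object in the
source) preserves zero morphisms. -/
lemma leftAdjoint_map_zero {C E : Type*} [Category C] [Category E]
    [HasZeroMorphisms C] [HasZeroMorphisms E] [HasZeroObject C]
    {F : C ⥤ E} {G : E ⥤ C} (adj : F ⊣ G) {A B : C} :
    F.map (0 : A ⟶ B) = 0 := by
  have h : (0 : A ⟶ B) = (0 : A ⟶ (0 : C)) ≫ (0 : (0 : C) ⟶ B) := by simp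
  rw [h, F.map_comp]
  have hz : F.map (0 : A ⟶ (0 : C)) = 0 :=
    (leftAdjoint_isZero_obj_zero adj).eq_of_tgt _ _
  rw [hz, zero_comp]

/-- Orthogonality of the glued classes: if `X` lies in the glued aisle
(`qX ∈ D¹_{≥0}` and `i_L X ∈ D⁰_{≥0}`) and `Y` lies in the glued coaisle
(`qY ∈ D¹_{<0}` and `i_R Y ∈ D⁰_{<0}`), then every morphism `X ⟶ Y` is zero. -/
theorem recollement_glued_orthogonality
    {D₀ D D₁ : Type*} [Category D₀] [Category D] [Category D₁]
    [HasZeroMorphisms D₀] [HasZeroMorphisms D] [HasZeroMorphisms D₁]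
    [HasZeroObject D₀] [HasZeroObject D] [HasZeroObject D₁]
    [HasShift D₀ ℤ] [HasShift D ℤ] [HasShift D₁ ℤ]
    (R : Recollement D₀ D D₁) (t₀ : TStructure D₀) (t₁ : TStructure D₁)
    {X Y : D}
    (hX₁ : R.q.obj X ∈ t₁.aisle) (hX₀ : R.iL.obj X ∈ t₀.aisle)
    (hY₁ : R.q.obj Y ∈ t₁.coaisle) (hY₀ : R.iR.obj Y ∈ t₀.coaisle)
    (f : X ⟶ Y) : f = 0 := by
  -- `q f = 0` by orthogonality in `D₁`
  have hqf : R.q.map f = 0 := t₁.hom_zero hX₁ hY₁ _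
  -- hence `f ≫ η_Y = 0` where `η` is the unit of `q ⊣ qR`
  have h1 : f ≫ R.adj_qR.unit.app Y = 0 := by
    apply (R.adj_qR.homEquiv X (R.q.obj Y)).symm.injective
    rw [Adjunction.homEquiv_counit, Adjunction.homEquiv_counit]
    rw [R.q.map_comp, leftAdjoint_map_zero R.adj_qR, zero_comp, hqf]
    have := R.adj_qR.left_triangle_components Y
    rw [Category.assoc, this, Category.comp_id]
  -- lift `f` through the fiber `i iR Y ⟶ Y`
  obtain ⟨hpb, -⟩ := R.fib_cofib_i_q Y
  have hcomm : f ≫ R.adj_qR.unit.app Y = (0 : X ⟶ (0 : D)) ≫ 0 := by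
    rw [h1, zero_comp]
  have hfac : hpb.lift f 0 hcomm ≫ R.adj_iR.counit.app Y = f := hpb.lift_fst f 0 hcomm
  -- the lift vanishes by orthogonality in `D₀`
  have hlift : hpb.lift f 0 hcomm = 0 := by
    have h0 : (R.adj_iL.homEquiv X (R.iR.obj Y)).symm (hpb.lift f 0 hcomm) = 0 :=
      t₀.hom_zero hX₀ hY₀ _
    have := congrArg (R.adj_iL.homEquiv X (R.iR.obj Y)) h0
    rw [Equiv.apply_symm_apply] at this
    rw [this, Adjunction.homEquiv_unit, leftAdjoint_map_zero R.adj_iR, comp_zero]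
  rw [← hfac, hlift, zero_comp]
end

section
/- In the Jacob ladder of a recollement, applying q to the truncation triangle SX → X → RX of the glued t-structure yields q(SX) ≅ S₁(qX) and q(RX) ≅ R₁(qX); i.e., q intertwines the glued truncation functors with the truncation functors of t₁. -/
open CategoryTheory Limits ZeroObject

/-- A functor preserves pullout (biCartesian) squares. -/
def PreservesPullouts {C D : Type*} [Category C] [Category D] (F : C ⥤ D) : Prop :=
  ∀ ⦃W X Y Z : C⦄ (f : W ⟶ X) (g : W ⟶ Y) (h : X ⟶ Z) (k : Y ⟶ Z),
    IsPullback f g h k → IsPushout f g h k →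
      IsPullback (F.map f) (F.map g) (F.map h) (F.map k) ∧
      IsPushout (F.map f) (F.map g) (F.map h) (F.map k)

/-- In the Jacob ladder of a recollement, `q` intertwines the truncation functors of the
glued `t`-structure with those of `t₁`: applying `q` to a truncation triangle
`S X ⟶ X ⟶ R X` of the glued `t`-structure yields `q (S X) ≅ S₁ (q X)` and
`q (R X) ≅ R₁ (q X)`. -/
theorem recollement_q_intertwines_truncations
    {D₀ D D₁ : Type*} [Category D₀] [Category D] [Category D₁]
    [HasZeroMorphisms D₀] [HasZeroMorphisms D] [HasZeroMorphisms D₁]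
    [HasZeroObject D₀] [HasZeroObject D] [HasZeroObject D₁]
    [HasShift D₀ ℤ] [HasShift D ℤ] [HasShift D₁ ℤ]
    (R : Recollement D₀ D D₁) (t₀ : TStructure D₀) (t₁ : TStructure D₁)
    (hq : PreservesPullouts R.q)
    -- a truncation triangle `S ⟶ X ⟶ Rt` of `X` for the glued `t`-structure
    {X S Rt : D} (s : S ⟶ X) (r : X ⟶ Rt)
    (hS : R.q.obj S ∈ t₁.aisle ∧ R.iL.obj S ∈ t₀.aisle)
    (hR : R.q.obj Rt ∈ t₁.coaisle ∧ R.iR.obj Rt ∈ t₀.coaisle)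
    (htr : IsPullback s (0 : S ⟶ 0) r (0 : (0 : D) ⟶ Rt))
    (htr' : IsPushout s (0 : S ⟶ 0) r (0 : (0 : D) ⟶ Rt))
    -- a truncation triangle `S₁ ⟶ q X ⟶ R₁` of `q X` with respect to `t₁`
    {S₁ R₁ : D₁} (s₁ : S₁ ⟶ R.q.obj X) (r₁ : R.q.obj X ⟶ R₁)
    (hS₁ : S₁ ∈ t₁.aisle) (hR₁ : R₁ ∈ t₁.coaisle)
    (htr₁ : IsPullback s₁ (0 : S₁ ⟶ 0) r₁ (0 : (0 : D₁) ⟶ R₁))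
    (htr₁' : IsPushout s₁ (0 : S₁ ⟶ 0) r₁ (0 : (0 : D₁) ⟶ R₁)) :
    Nonempty (R.q.obj S ≅ S₁) ∧ Nonempty (R.q.obj Rt ≅ R₁) := by
  have hz : IsZero (R.q.obj (0 : D)) := by
    rw [IsZero.iff_id_eq_zero]
    apply (R.adj_qR.homEquiv _ _).injective
    exact (isZero_zero D).eq_of_src _ _
  obtain ⟨hpb, hpo⟩ := hq s (0 : S ⟶ 0) r (0 : (0 : D) ⟶ Rt) htr htr'
  -- the aisle-coaisle vanishing facts
  have h1 : R.q.map s ≫ r₁ = 0 := t₁.hom_zero hS.1 hR₁ _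
  have h2 : s₁ ≫ R.q.map r = 0 := t₁.hom_zero hS₁ hR.1 _
  -- maps between the two fibers
  let ℓ : R.q.obj S ⟶ S₁ := htr₁.lift (R.q.map s) 0 (by rw [h1, zero_comp])
  have hℓ : ℓ ≫ s₁ = R.q.map s := htr₁.lift_fst _ _ _
  let m : S₁ ⟶ R.q.obj S := hpb.lift s₁ 0 (by rw [h2, zero_comp])
  have hm : m ≫ R.q.map s = s₁ := hpb.lift_fst _ _ _
  -- maps between the two cofibers
  let u : R.q.obj Rt ⟶ R₁ := hpo.desc r₁ 0 (by rw [h1, comp_zero])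
  have hu : R.q.map r ≫ u = r₁ := hpo.inl_desc _ _ _
  let v : R₁ ⟶ R.q.obj Rt := htr₁'.desc (R.q.map r) 0 (by rw [h2, comp_zero])
  have hv : r₁ ≫ v = R.q.map r := htr₁'.inl_desc _ _ _
  constructor
  · exact ⟨⟨ℓ, m,
      hpb.hom_ext
        (by rw [Category.assoc, hm, hℓ, Category.id_comp])
        (hz.eq_of_tgt _ _),
      htr₁.hom_ext
        (by rw [Category.assoc, hℓ, hm, Category.id_comp])
        ((isZero_zero D₁).eq_of_tgt _ _)⟩⟩
  · exact ⟨⟨u, v,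
      hpo.hom_ext
        (by rw [← Category.assoc, hu, hv, Category.comp_id])
        (hz.eq_of_src _ _),
      htr₁'.hom_ext
        (by rw [← Category.assoc, hv, hu, Category.comp_id])
        ((isZero_zero D₁).eq_of_src _ _)⟩⟩
end
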